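/- Let F(x) = f(x) + τ‖x‖₁ with f(x) = (1/2)xᵀAx − bᵀx, A symmetric positive semidefinite. Let v(x) be the minimum-norm subgradient of F at x and let v_p(x) be its projection onto {y : yᵢ = 0 for all i with xᵢ ≠ 0} (i.e., (v_p(x))ᵢ = vᵢ(x) if xᵢ = 0, else 0). Suppose v_p(x) ≠ 0. Then (v_p(x))ᵀ A v_p(x) > 0, and with α* = ‖v_p(x)‖²/((v_p(x))ᵀ A v_p(x)) and x⁺ = x − α* v_p(x), one has F(x⁺) = F(x) − ‖v_p(x)‖⁴ / (2 (v_p(x))ᵀ A v_p(x)) ≤ F(x) − ‖v_p(x)‖²/(2‖A‖). -/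

import Mathlib

open Matrix

/-- `f(x) = (1/2) xᵀAx − bᵀx`. -/
noncomputable def quadObj {n : ℕ} (A : Matrix (Fin n) (Fin n) ℝ) (b : Fin n → ℝ)
    (x : Fin n → ℝ) : ℝ :=
  (1 / 2) * (x ⬝ᵥ A.mulVec x) - b ⬝ᵥ x

/-- `F(x) = (1/2) xᵀAx − bᵀx + τ‖x‖₁`. -/
noncomputable def l1QuadObj {n : ℕ} (A : Matrix (Fin n) (Fin n) ℝ) (b : Fin n → ℝ)
    (τ : ℝ) (x : Fin n → ℝ) : ℝ :=
  quadObj A b x + τ * ∑ i, |x i|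

/-- The minimum-norm subgradient `v(x)` of `F`, given componentwise. -/
noncomputable def minSubgrad {n : ℕ} (A : Matrix (Fin n) (Fin n) ℝ) (b : Fin n → ℝ)
    (τ : ℝ) (x : Fin n → ℝ) : Fin n → ℝ := fun i =>
  if x i ≠ 0 then (A.mulVec x - b) i + τ * Real.sign (x i)
  else min ((A.mulVec x - b) i + τ) (max 0 ((A.mulVec x - b) i - τ))

/-- The projected minimum-norm subgradient `v_p(x)`: `v(x)` on `I₀(x)`, zero elsewhere. -/
noncomputable def projMinSubgrad {n : ℕ} (A : Matrix (Fin n) (Fin n) ℝ) (b : Fin n → ℝ)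
    (τ : ℝ) (x : Fin n → ℝ) : Fin n → ℝ := fun i =>
  if x i = 0 then minSubgrad A b τ x i else 0

section aux

variable {n : ℕ} (A : Matrix (Fin n) (Fin n) ℝ) (b : Fin n → ℝ) (τ : ℝ) (x : Fin n → ℝ)

lemma gradDot (hτ : 0 ≤ τ) (i : Fin n) :
    (A.mulVec x - b) i * projMinSubgrad A b τ x i
      = projMinSubgrad A b τ x i ^ 2 + τ * |projMinSubgrad A b τ x i| := by
  set g := (A.mulVec x - b) i with hg
  by_cases hx : x i = 0
  · have hv : projMinSubgrad A b τ x i = min (g + τ) (max 0 (g - τ)) := by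
      simp [projMinSubgrad, minSubgrad, hx, hg]
    rcases le_or_gt g (-τ) with h1 | h1
    · have hvi : projMinSubgrad A b τ x i = g + τ := by
        rw [hv]; exact min_eq_left (le_trans (by linarith) (le_max_left 0 _))
      rw [hvi, abs_of_nonpos (by linarith)]; ring
    · rcases le_or_gt g τ with h2 | h2
      · have hvi : projMinSubgrad A b τ x i = 0 := by
          rw [hv, max_eq_left (by linarith), min_eq_right (by linarith)]
        simp [hvi]
      · have hvi : projMinSubgrad A b τ x i = g - τ := by
          rw [hv, max_eq_right (by linarith)]
          exact min_eq_right (by linarith)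
        rw [hvi, abs_of_nonneg (by linarith)]; ring
  · simp [projMinSubgrad, hx]

lemma key_expand (hA : A.PosSemidef) (hτ : 0 ≤ τ) (α : ℝ) (hα : 0 ≤ α) :
    l1QuadObj A b τ (x - α • projMinSubgrad A b τ x)
      = l1QuadObj A b τ x
        - α * (projMinSubgrad A b τ x ⬝ᵥ projMinSubgrad A b τ x)
        + α ^ 2 / 2 * (projMinSubgrad A b τ x ⬝ᵥ A.mulVec (projMinSubgrad A b τ x)) := by
  set v := projMinSubgrad A b τ x with hvdef
  have hsym : x ⬝ᵥ A.mulVec v = v ⬝ᵥ A.mulVec x := by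
    have hAT : Aᵀ = A := by
      have := hA.isHermitian.eq
      rwa [Matrix.conjTranspose_eq_transpose_of_trivial] at this
    rw [Matrix.dotProduct_mulVec, ← Matrix.mulVec_transpose, hAT, dotProduct_comm]
  have hl1 : ∑ i, |(x - α • v) i| = ∑ i, |x i| + α * ∑ i, |v i| := by
    rw [Finset.mul_sum, ← Finset.sum_add_distrib]
    refine Finset.sum_congr rfl fun i _ => ?_
    by_cases hx : x i = 0
    · simp [hx, abs_mul, abs_of_nonneg hα]
    · have : v i = 0 := by simp [hvdef, projMinSubgrad, hx]
      simp [this, hx]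
  have hgd : (A.mulVec x - b) ⬝ᵥ v = v ⬝ᵥ v + τ * ∑ i, |v i| := by
    unfold dotProduct
    rw [Finset.mul_sum, ← Finset.sum_add_distrib]
    refine Finset.sum_congr rfl fun i _ => ?_
    rw [gradDot A b τ x hτ i]; ring
  have hgd' : v ⬝ᵥ A.mulVec x - b ⬝ᵥ v = v ⬝ᵥ v + τ * ∑ i, |v i| := by
    rw [← hgd]; simp [sub_dotProduct, dotProduct_comm]
  simp only [l1QuadObj, quadObj, hl1]
  rw [Matrix.mulVec_sub, Matrix.mulVec_smul]
  rw [sub_dotProduct, dotProduct_sub, dotProduct_sub, dotProduct_smul, smul_dotProduct,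
    smul_dotProduct, dotProduct_smul, dotProduct_sub, dotProduct_smul]
  simp only [smul_eq_mul]
  rw [hsym]
  linear_combination (-α) * hgd'


end aux

theorem stmt4 {n : ℕ} (A : Matrix (Fin n) (Fin n) ℝ) (b : Fin n → ℝ) (τ : ℝ)
    (hA : A.PosSemidef) (hτ : 0 ≤ τ)
    (hbdd : ∃ xs, ∀ y, l1QuadObj A b τ xs ≤ l1QuadObj A b τ y)
    (x : Fin n → ℝ)
    (hvp : projMinSubgrad A b τ x ≠ 0) :
    0 < projMinSubgrad A b τ x ⬝ᵥ A.mulVec (projMinSubgrad A b τ x) ∧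
    (l1QuadObj A b τ
        (x - ((projMinSubgrad A b τ x ⬝ᵥ projMinSubgrad A b τ x) /
            (projMinSubgrad A b τ x ⬝ᵥ A.mulVec (projMinSubgrad A b τ x))) •
            projMinSubgrad A b τ x) =
      l1QuadObj A b τ x -
        (projMinSubgrad A b τ x ⬝ᵥ projMinSubgrad A b τ x) ^ 2 /
          (2 * (projMinSubgrad A b τ x ⬝ᵥ A.mulVec (projMinSubgrad A b τ x)))) ∧
    l1QuadObj A b τ
        (x - ((projMinSubgrad A b τ x ⬝ᵥ projMinSubgrad A b τ x) /
            (projMinSubgrad A b τ x ⬝ᵥ A.mulVec (projMinSubgrad A b τ x))) •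
            projMinSubgrad A b τ x) ≤
      l1QuadObj A b τ x -
        (projMinSubgrad A b τ x ⬝ᵥ projMinSubgrad A b τ x) /
          (2 * ‖Matrix.toEuclideanCLM (𝕜 := ℝ) A‖) := by
  set v := projMinSubgrad A b τ x with hvdef
  set s := v ⬝ᵥ v with hs
  set q := v ⬝ᵥ A.mulVec v with hq
  have hs_pos : 0 < s := by
    have : v ⬝ᵥ v = ∑ i, v i ^ 2 := by
      unfold dotProduct; exact Finset.sum_congr rfl fun i _ => (sq (v i)).symm
    rw [hs, this]
    rcases Function.ne_iff.mp hvp with ⟨i, hi⟩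
    have := Finset.sum_le_sum (f := fun _ : Fin n => (0:ℝ)) (g := fun i => v i ^ 2)
      (s := Finset.univ) (fun j _ => sq_nonneg (v j))
    have hpos : 0 < v i ^ 2 := pow_two_pos_of_ne_zero (by simpa using hi)
    calc (0:ℝ) < v i ^ 2 := hpos
      _ ≤ ∑ j, v j ^ 2 := Finset.single_le_sum (fun j _ => sq_nonneg (v j)) (Finset.mem_univ i)
  have hq_nonneg : 0 ≤ q := by simpa using hA.dotProduct_mulVec_nonneg v
  have hq_pos : 0 < q := by
    rcases lt_or_eq_of_le hq_nonneg with h | h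
    · exact h
    · exfalso
      obtain ⟨xs, hxs⟩ := hbdd
      set α := (l1QuadObj A b τ x - l1QuadObj A b τ xs + 1) / s with hα
      have hα_nonneg : 0 ≤ α := by
        have := hxs x
        apply div_nonneg (by linarith) hs_pos.le
      have hkey := key_expand A b τ x hA hτ α hα_nonneg
      rw [← hq, ← h, ← hs] at hkey
      have hαs : α * s = l1QuadObj A b τ x - l1QuadObj A b τ xs + 1 := by
        rw [hα]; field_simp
      have := hxs (x - α • v)
      rw [hkey, hαs] at this
      linarith
  refine ⟨hq_pos, ?_, ?_⟩
  · have hkey := key_expand A b τ x hA hτ (s / q) (div_nonneg hs_pos.le hq_pos.le)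
    rw [← hq, ← hs] at hkey
    rw [hkey]
    field_simp
    ring
  · have hkey := key_expand A b τ x hA hτ (s / q) (div_nonneg hs_pos.le hq_pos.le)
    rw [← hq, ← hs] at hkey
    rw [hkey]
    have hbound : q ≤ ‖Matrix.toEuclideanCLM (𝕜 := ℝ) A‖ * s := by
      set T := Matrix.toEuclideanCLM (𝕜 := ℝ) A with hT
      set u : EuclideanSpace ℝ (Fin n) := (WithLp.equiv 2 _).symm v with hu
      have h1 : q = @inner ℝ _ _ u (T u) := by
        simp [hq, hT, hu, PiLp.inner_apply, Matrix.toLin'_apply,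
          dotProduct, Matrix.mulVec, RCLike.inner_apply]
        exact Finset.sum_congr rfl fun i _ => mul_comm _ _
      have h2 : s = ‖u‖ ^ 2 := by
        rw [hs, ← real_inner_self_eq_norm_sq]
        simp [hu, PiLp.inner_apply, dotProduct, RCLike.inner_apply]
        rw [PiLp.norm_sq_eq_of_L2]
        simp only [PiLp.toLp_apply, Real.norm_eq_abs, sq_abs, sq, abs_mul_abs_self]
      have h3 : @inner ℝ _ _ u (T u) ≤ ‖u‖ * ‖T u‖ := real_inner_le_norm u (T u)
      have h4 : ‖T u‖ ≤ ‖T‖ * ‖u‖ := T.le_opNorm u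
      rw [h1, h2]
      nlinarith [norm_nonneg u, norm_nonneg T]
    have hN : 0 < ‖Matrix.toEuclideanCLM (𝕜 := ℝ) A‖ := by
      by_contra h
      push_neg at h
      nlinarith
    set N := ‖Matrix.toEuclideanCLM (𝕜 := ℝ) A‖
    have key : s / (2 * N) ≤ s * (s / q) - (s / q) ^ 2 / 2 * q := by
      have h1 : s * (s / q) - (s / q) ^ 2 / 2 * q = s ^ 2 / (2 * q) := by
        field_simp; ring
      rw [h1]
      rw [div_le_div_iff₀ (by positivity) (by positivity)]
      nlinarith
    linarith
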